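/- Let 0 < ε < 1 and let k, ν, ℓ be integers with 1 ≤ ℓ ≤ ν − 1 and k ≥ 2ν/ε, and write C = C(k, ν − ℓ) for the binomial coefficient. Then 1 − (1 − (1 − ε/2)/C)^{(1 − ε/2)·k/(ν − ℓ)} ≥ (1 − 1/e − ε) / C(k − 1, ν − ℓ − 1). -/

import Mathlib

lemma aux_exp_neg_le (y : ℝ) (h0 : 0 ≤ y) (h1 : y ≤ 1) :
    Real.exp (-y) ≤ 1 - y * (1 - 1 / Real.exp 1) := by
  have h := convexOn_exp.2 (Set.mem_univ (0:ℝ)) (Set.mem_univ (-1:ℝ))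
      (by linarith : (0:ℝ) ≤ 1 - y) h0 (by ring)
  simp only [smul_eq_mul, mul_zero, mul_neg, mul_one, zero_add, Real.exp_zero,
    Real.exp_neg] at h
  rw [Real.exp_neg, one_div]
  linarith

set_option maxHeartbeats 1000000 in
/-- Final inequality in the approximation-ratio proof of GreedyTuple (Theorem 3). -/
theorem stmt17 (ε : ℝ) (k ν ℓ : ℕ) (hε0 : 0 < ε) (hε1 : ε < 1)
    (hℓ1 : 1 ≤ ℓ) (hℓ2 : ℓ ≤ ν - 1) (hk : (k : ℝ) ≥ 2 * (ν : ℝ) / ε) :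
    1 - (1 - (1 - ε / 2) / (k.choose (ν - ℓ) : ℝ))
          ^ ((1 - ε / 2) * (k : ℝ) / ((ν : ℝ) - (ℓ : ℝ)))
      ≥ (1 - 1 / Real.exp 1 - ε) / ((k - 1).choose (ν - ℓ - 1) : ℝ) := by
  have hν2 : 2 ≤ ν := by omega
  have hℓν : ℓ + 1 ≤ ν := by omega
  -- k > ν
  have hνk : ν < k := by
    have h1 : 2 * (ν : ℝ) ≤ 2 * (ν : ℝ) / ε := by
      have hν0 : (0:ℝ) < ν := by exact_mod_cast (show 0 < ν by omega)
      rw [le_div_iff₀ hε0]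
      nlinarith
    have h2 : (ν : ℝ) < (k : ℝ) := by
      have hν0 : (0:ℝ) < ν := Nat.cast_pos.mpr (by omega)
      linarith
    exact_mod_cast h2
  set r := ν - ℓ with hrdef
  have hr1 : 1 ≤ r := by omega
  have hrk : r ≤ k := by omega
  have hr1k : r - 1 ≤ k - 1 := by omega
  have hcast : (ν : ℝ) - (ℓ : ℝ) = (r : ℝ) := by
    rw [hrdef, Nat.cast_sub (by omega)]
  set C : ℝ := (k.choose r : ℝ) with hC
  set C' : ℝ := ((k-1).choose (r-1) : ℝ) with hC'
  have hC1 : (1:ℝ) ≤ C := Nat.one_le_cast.mpr (Nat.choose_pos hrk)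
  have hC'1 : (1:ℝ) ≤ C' := Nat.one_le_cast.mpr (Nat.choose_pos hr1k)
  have hC0 : (0:ℝ) < C := by linarith
  have hC'0 : (0:ℝ) < C' := by linarith
  have hrpos : (0:ℝ) < (r:ℝ) := by exact_mod_cast hr1
  -- the choose identity: k * C' = C * r
  have hid : (k:ℝ) * C' = C * (r:ℝ) := by
    have hnat : k * (k-1).choose (r-1) = k.choose r * r := by
      have := Nat.add_one_mul_choose_eq (k-1) (r-1)
      have hk1 : k - 1 + 1 = k := by omega
      have hr1' : r - 1 + 1 = r := by omega
      rw [hk1, hr1'] at this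
      exact this
    rw [hC, hC']
    exact_mod_cast hnat
  set x : ℝ := (1 - ε/2) / C with hx
  set E : ℝ := (1 - ε/2) * (k:ℝ) / ((ν:ℝ) - (ℓ:ℝ)) with hE
  have hε2 : 0 < 1 - ε/2 := by linarith
  have hε2' : 1 - ε/2 ≤ 1 := by linarith
  have hx0 : 0 < x := div_pos hε2 hC0
  have hx1 : x ≤ 1 := by
    rw [hx, div_le_one hC0]; linarith
  have hE0 : 0 ≤ E := by
    rw [hE, hcast]
    positivity
  have hk0 : (0:ℝ) ≤ (k:ℝ) := Nat.cast_nonneg k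
  -- step: (1-x)^E ≤ exp (-(x*E))
  have step1 : (1 - x) ^ E ≤ Real.exp (-(x * E)) := by
    have h1 : (1 - x) ^ E ≤ (Real.exp (-x)) ^ E := by
      apply Real.rpow_le_rpow (by linarith) _ hE0
      linarith [Real.add_one_le_exp (-x)]
    have h2 : (Real.exp (-x)) ^ E = Real.exp (-(x*E)) := by
      rw [← Real.exp_mul]; ring_nf
    linarith [h1, h2.le, h2.ge]
  -- x * E = (1-ε/2)^2 / C'
  have hxE : x * E = (1 - ε/2)^2 / C' := by
    rw [hx, hE, hcast, div_mul_div_comm,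
      div_eq_div_iff (mul_pos hC0 hrpos).ne' hC'0.ne']
    linear_combination (1 - ε/2)^2 * hid
  set y : ℝ := (1 - ε/2)^2 / C' with hy
  clear_value C C' x E y
  have hy0 : 0 ≤ y := by
    rw [hy]; exact div_nonneg (by positivity) hC'0.le
  have hy1 : y ≤ 1 := by
    rw [hy, div_le_one hC'0]
    nlinarith
  have step2 : Real.exp (-(x*E)) ≤ 1 - y * (1 - 1/Real.exp 1) := by
    rw [hxE]
    exact aux_exp_neg_le y hy0 hy1
  -- final comparison
  have he1 : (2:ℝ) ≤ Real.exp 1 := by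
    have := Real.add_one_le_exp (1:ℝ); linarith
  have hinv : 1 / Real.exp 1 ≤ 1/2 := by
    apply div_le_div_of_nonneg_left (by norm_num) (by norm_num) he1
  have hinv0 : 0 < 1 / Real.exp 1 := by positivity
  have h1 : (1-ε)*(1 - 1/Real.exp 1) ≤ (1-ε/2)^2*(1 - 1/Real.exp 1) := by
    apply mul_le_mul_of_nonneg_right _ (by linarith)
    nlinarith [sq_nonneg ε]
  have key : (1 - 1/Real.exp 1 - ε) ≤ (1-ε/2)^2 * (1 - 1/Real.exp 1) := by
    nlinarith [mul_pos hε0 hinv0, h1]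
  have final : (1 - 1/Real.exp 1 - ε) / C' ≤ y * (1 - 1/Real.exp 1) := by
    rw [hy, div_mul_eq_mul_div]
    exact (div_le_div_iff_of_pos_right hC'0).mpr key
  calc (1 - 1/Real.exp 1 - ε) / C' ≤ y * (1 - 1/Real.exp 1) := final
    _ ≤ 1 - Real.exp (-(x*E)) := by linarith
    _ ≤ 1 - (1-x)^E := by linarith
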